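/- arXiv:0911.2894 — 6 statements merged into one kernel-verified Lean document; each statement's English description precedes it below -/
import Mathlib

section
/- Let k be an infinite field, let f ∈ k[u,v] be a nondegenerate binary form of degree d ≥ 1 (its image over an algebraic closure of k is squarefree), let F be a field extension of k, let m ≥ 1, and let α_u, α_v be m × m matrices over F such that (a•α_u + b•α_v)^d = f(a,b)•1 for all a, b ∈ k (where f(a,b) ∈ k acts on matrices over F via the algebra map k → F). Then d divides m. -/
open MvPolynomial

namespace CliffordAux

variable {R S : Type*} [CommRing R] [CommRing S]

/-- Dehomogenization at `v = 1`. -/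
noncomputable def toPoly : MvPolynomial (Fin 2) R →+* Polynomial R :=
  MvPolynomial.eval₂Hom Polynomial.C ![Polynomial.X, 1]

lemma degree_fin2 (m : Fin 2 →₀ ℕ) : m.degree = m 0 + m 1 := by
  rw [Finsupp.degree_apply, Finset.sum_subset (Finset.subset_univ m.support)]
  · exact Fin.sum_univ_two m
  · intro i _ hi
    simpa using hi

lemma toPoly_monomial (m : Fin 2 →₀ ℕ) (c : R) :
    toPoly (monomial m c) = Polynomial.C c * Polynomial.X ^ (m 0) := by
  rw [toPoly, eval₂Hom_monomial]
  congr 1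
  rw [Finsupp.prod_fintype _ _ (fun i => pow_zero _), Fin.prod_univ_two]
  simp

lemma toPoly_apply (f : MvPolynomial (Fin 2) R) :
    toPoly f = ∑ m ∈ f.support, Polynomial.C (f.coeff m) * Polynomial.X ^ (m 0) := by
  conv_lhs => rw [f.as_sum, map_sum]
  exact Finset.sum_congr rfl fun m _ => toPoly_monomial m _

lemma toPoly_coeff {f : MvPolynomial (Fin 2) R} {d : ℕ} (hf : f.IsHomogeneous d)
    {i : ℕ} (hi : i ≤ d) :
    (toPoly f).coeff i = f.coeff (Finsupp.single 0 i + Finsupp.single 1 (d - i)) := by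
  set m0 : Fin 2 →₀ ℕ := Finsupp.single 0 i + Finsupp.single 1 (d - i) with hm0
  have hm00 : m0 0 = i := by simp [hm0, Finsupp.single_apply]
  have hm01 : m0 1 = d - i := by simp [hm0, Finsupp.single_apply]
  rw [toPoly_apply, Polynomial.finset_sum_coeff]
  simp only [Polynomial.coeff_C_mul, Polynomial.coeff_X_pow, mul_ite, mul_one, mul_zero]
  rw [Finset.sum_eq_single m0]
  · rw [if_pos hm00.symm]
  · intro b hbs hbne
    by_cases hdeg : b.degree = d
    · rw [if_neg]
      intro hb
      apply hbne
      have h1 : b 1 = m0 1 := by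
        have h2 := degree_fin2 b
        rw [hdeg, ← hb] at h2
        rw [hm01]; omega
      have h0 : b 0 = m0 0 := by rw [hm00, hb]
      ext j
      fin_cases j
      · simpa using h0
      · simpa using h1
    · simp [hf.coeff_eq_zero hdeg]
  · intro hns
    rw [if_pos hm00.symm, notMem_support_iff.mp hns]


lemma toPoly_natDegree_le {f : MvPolynomial (Fin 2) R} {d : ℕ} (hf : f.IsHomogeneous d) :
    (toPoly f).natDegree ≤ d := by
  rw [Polynomial.natDegree_le_iff_coeff_eq_zero]
  intro N hN
  rw [toPoly_apply, Polynomial.finset_sum_coeff]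
  apply Finset.sum_eq_zero
  intro m _
  simp only [Polynomial.coeff_C_mul, Polynomial.coeff_X_pow, mul_ite, mul_one, mul_zero]
  split_ifs with h
  · apply hf.coeff_eq_zero
    rw [degree_fin2]
    omega
  · rfl

lemma toPoly_injOn {f g : MvPolynomial (Fin 2) R} {d : ℕ} (hf : f.IsHomogeneous d)
    (hg : g.IsHomogeneous d) (h : toPoly f = toPoly g) : f = g := by
  ext m
  by_cases hdeg : m.degree = d
  · have hm0 : m 0 ≤ d := by rw [degree_fin2] at hdeg; omega
    have hme : m = Finsupp.single 0 (m 0) + Finsupp.single 1 (d - m 0) := by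
      ext j
      fin_cases j
      · simp [Finsupp.single_apply]
      · rw [degree_fin2] at hdeg
        simp only [Fin.isValue, Finsupp.coe_add, Pi.add_apply, Finsupp.single_apply]
        norm_num
        omega
    rw [hme, ← toPoly_coeff hf hm0, ← toPoly_coeff hg hm0, h]
  · rw [hf.coeff_eq_zero hdeg, hg.coeff_eq_zero hdeg]

/-- Homogenization to degree `e`. -/
noncomputable def homog (e : ℕ) (q : Polynomial R) : MvPolynomial (Fin 2) R :=
  ∑ i ∈ Finset.range (e + 1),
    monomial (Finsupp.single 0 i + Finsupp.single 1 (e - i)) (q.coeff i)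

lemma homog_isHomogeneous (e : ℕ) (q : Polynomial R) : (homog e q).IsHomogeneous e := by
  apply IsHomogeneous.sum
  intro i hi
  rw [Finset.mem_range] at hi
  apply isHomogeneous_monomial
  rw [degree_fin2]
  simp only [Fin.isValue, Finsupp.coe_add, Pi.add_apply, Finsupp.single_apply]
  norm_num
  omega

lemma toPoly_homog (e : ℕ) (q : Polynomial R) (hq : q.natDegree ≤ e) :
    toPoly (homog e q) = q := by
  rw [homog, map_sum]
  conv_rhs => rw [q.as_sum_range' (e + 1) (by omega)]
  apply Finset.sum_congr rfl
  intro i _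
  rw [toPoly_monomial]
  simp only [Fin.isValue, Finsupp.coe_add, Pi.add_apply, Finsupp.single_apply]
  norm_num
  rw [Polynomial.C_mul_X_pow_eq_monomial]

lemma toPoly_map (φ : R →+* S) (f : MvPolynomial (Fin 2) R) :
    toPoly (MvPolynomial.map φ f) = (toPoly f).map φ := by
  have h : (toPoly (R := S)).comp (MvPolynomial.map φ)
      = (Polynomial.mapRingHom φ).comp (toPoly (R := R)) := by
    apply MvPolynomial.ringHom_ext
    · intro r
      simp [toPoly]
    · intro i
      fin_cases i <;> simp [toPoly]
  exact DFunLike.congr_fun h f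

lemma eval_toPoly (a : R) (f : MvPolynomial (Fin 2) R) :
    Polynomial.eval a (toPoly f) = MvPolynomial.eval ![a, 1] f := by
  have h : (Polynomial.evalRingHom a).comp (toPoly (R := R))
      = MvPolynomial.eval ![a, 1] := by
    apply MvPolynomial.ringHom_ext
    · intro r
      simp [toPoly]
    · intro i
      fin_cases i <;> simp [toPoly]
  exact DFunLike.congr_fun h f


lemma rootMultiplicity_pow' {K : Type*} [Field K] {p : Polynomial K} (hp : p ≠ 0)
    (a : K) (n : ℕ) : (p ^ n).rootMultiplicity a = n * p.rootMultiplicity a := by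
  induction n with
  | zero => simp [Polynomial.rootMultiplicity_eq_zero]
  | succ n ih =>
      rw [pow_succ, Polynomial.rootMultiplicity_mul (mul_ne_zero (pow_ne_zero n hp) hp), ih]
      ring

set_option maxHeartbeats 1000000 in
lemma squarefree_toPoly {K : Type*} [Field K] [IsAlgClosed K] {d : ℕ}
    {f : MvPolynomial (Fin 2) K} (hf : f.IsHomogeneous d) (hsf : Squarefree f) :
    Squarefree (toPoly f) := by
  have hXne : ∀ w : MvPolynomial (Fin 2) K, ∀ ψ : MvPolynomial (Fin 2) K →+* Polynomial K,
      ψ w = Polynomial.X → ¬ IsUnit w := by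
    intro w ψ hψ hu
    exact Polynomial.not_isUnit_X (hψ ▸ hu.map ψ)
  have hf0 : f ≠ 0 := by
    rintro rfl
    exact hXne (X 0) toPoly (by simp [toPoly]) (hsf (X 0) (dvd_zero _))
  have hp0 : toPoly f ≠ 0 := by
    intro h
    exact hf0 (toPoly_injOn hf (isHomogeneous_zero (Fin 2) K d) (by rw [h, map_zero]))
  intro r hr
  by_contra hru
  have hr0 : r ≠ 0 := by
    rintro rfl
    rw [mul_zero, zero_dvd_iff] at hr
    exact hp0 hr
  have hdeg : r.degree ≠ 0 := fun h => hru (Polynomial.isUnit_iff_degree_eq_zero.2 h)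
  obtain ⟨a, ha⟩ := IsAlgClosed.exists_root r hdeg
  have hdvd : (Polynomial.X - Polynomial.C a) ^ 2 ∣ toPoly f := by
    refine dvd_trans ?_ hr
    rw [← sq]
    exact pow_dvd_pow_of_dvd (Polynomial.dvd_iff_isRoot.2 ha) 2
  obtain ⟨q, hq⟩ := hdvd
  have hq0 : q ≠ 0 := by
    rintro rfl
    rw [mul_zero] at hq
    exact hp0 hq
  have hdp : (toPoly f).natDegree ≤ d := toPoly_natDegree_le hf
  have hnd : (toPoly f).natDegree = 2 + q.natDegree := by
    rw [hq, Polynomial.natDegree_mul (pow_ne_zero _ (Polynomial.X_sub_C_ne_zero a)) hq0,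
      Polynomial.natDegree_pow, Polynomial.natDegree_X_sub_C, mul_one]
  set w : MvPolynomial (Fin 2) K := X 0 - C a * X 1 with hwdef
  have hw : w.IsHomogeneous 1 := (isHomogeneous_X K (0 : Fin 2)).sub (isHomogeneous_C_mul_X a 1)
  have hQ : (w ^ 2 * homog (d - 2) q).IsHomogeneous d := by
    have h2 : (1 * 2) + (d - 2) = d := by omega
    have hh := (hw.pow 2).mul (homog_isHomogeneous (d - 2) q)
    rwa [h2] at hh
  have hfw : f = w ^ 2 * homog (d - 2) q := by
    apply toPoly_injOn hf hQ
    rw [map_mul, map_pow]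
    have hwp : toPoly w = Polynomial.X - Polynomial.C a := by
      simp [toPoly, hwdef]
    rw [hwp, toPoly_homog _ _ (by omega), hq]
  refine hXne w (MvPolynomial.eval₂Hom Polynomial.C ![Polynomial.X, 0]) (by simp [hwdef]) ?_
  exact hsf w ⟨homog (d - 2) q, by rw [hfw, sq]⟩

end CliffordAux

/-- (Haile–Tesser) If `f` is a nondegenerate binary form of degree `d ≥ 1` over an infinite
field `k`, then the dimension of any representation of the Clifford algebra `C_f` is
divisible by `d`: if matrices `α_u, α_v ∈ M_m(F)` satisfy the Clifford relations
`(a•α_u + b•α_v)^d = f(a,b)•1` for all `a, b ∈ k`, then `d ∣ m`. -/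
theorem degree_dvd_dim_of_clifford_rep (k : Type*) [Field k] [Infinite k]
    (d : ℕ) (hd : 1 ≤ d)
    (f : MvPolynomial (Fin 2) k) (hf : f.IsHomogeneous d)
    (hsf : Squarefree (MvPolynomial.map (algebraMap k (AlgebraicClosure k)) f))
    (F : Type*) [Field F] [Algebra k F]
    (m : ℕ) (hm : 1 ≤ m)
    (αu αv : Matrix (Fin m) (Fin m) F)
    (hrel : ∀ a b : k,
      (algebraMap k F a • αu + algebraMap k F b • αv) ^ d =
        algebraMap k F (eval ![a, b] f) • (1 : Matrix (Fin m) (Fin m) F)) :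
    d ∣ m := by
  classical
  rcases eq_or_lt_of_le hd with h1 | hd2
  · exact h1 ▸ one_dvd m
  set K := AlgebraicClosure k
  set fK := MvPolynomial.map (algebraMap k K) f with hfKdef
  have hfK : fK.IsHomogeneous d := hf.map _
  have hsfK : Squarefree (CliffordAux.toPoly fK) := CliffordAux.squarefree_toPoly hfK hsf
  set p : Polynomial k := CliffordAux.toPoly f with hpdef
  have hmapK : CliffordAux.toPoly fK = p.map (algebraMap k K) := CliffordAux.toPoly_map _ f
  have hsep : p.Separable := by
    rw [← Polynomial.separable_map (algebraMap k K), ← hmapK]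
    exact PerfectField.separable_iff_squarefree.2 hsfK
  have hdegp : 1 ≤ p.natDegree := by
    by_contra hcon
    push_neg at hcon
    have h0 : (CliffordAux.toPoly fK).natDegree = 0 := by
      rw [hmapK, Polynomial.natDegree_map_eq_of_injective (algebraMap k K).injective]
      omega
    have hc : CliffordAux.toPoly fK = Polynomial.C ((CliffordAux.toPoly fK).coeff 0) :=
      Polynomial.eq_C_of_natDegree_eq_zero h0
    have hfe : fK = CliffordAux.homog d (CliffordAux.toPoly fK) :=
      CliffordAux.toPoly_injOn hfK (CliffordAux.homog_isHomogeneous _ _)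
        (CliffordAux.toPoly_homog _ _ (CliffordAux.toPoly_natDegree_le hfK)).symm
    set c := (CliffordAux.toPoly fK).coeff 0 with hcdef
    have hhc : CliffordAux.homog d (Polynomial.C c) = monomial (Finsupp.single 1 d) c := by
      rw [CliffordAux.homog, Finset.sum_eq_single 0]
      · simp
      · intro i _ hne
        rw [Polynomial.coeff_C, if_neg hne]
        exact monomial_zero
      · intro h
        exact absurd (Finset.mem_range.2 (by omega)) h
    have hdvd : (X 1 : MvPolynomial (Fin 2) K) * X 1 ∣ fK := by
      refine ⟨monomial (Finsupp.single 1 (d - 2)) c, ?_⟩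
      calc fK = CliffordAux.homog d (Polynomial.C c) := by rw [hfe, ← hc]
        _ = monomial (Finsupp.single 1 d) c := hhc
        _ = X 1 * X 1 * monomial (Finsupp.single 1 (d - 2)) c := by
            rw [← sq, X_pow_eq_monomial, monomial_mul, one_mul, ← Finsupp.single_add,
              show 2 + (d - 2) = d from by omega]
    have hu := hsf (X 1) hdvd
    have hux : IsUnit (Polynomial.X : Polynomial K) := by
      have hmap := hu.map (MvPolynomial.eval₂Hom Polynomial.C ![0, Polynomial.X])
      simpa using hmap
    exact Polynomial.not_isUnit_X hux
  -- the determinant polynomial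
  set φ := algebraMap k F with hφdef
  have hFinf : Infinite F := Infinite.of_injective φ φ.injective
  set M : Matrix (Fin m) (Fin m) (Polynomial F) :=
    Matrix.of fun i j => Polynomial.C (αu i j) * Polynomial.X + Polynomial.C (αv i j) with hM
  set g : Polynomial F := M.det with hg
  set pF := p.map φ with hpF
  have heval : ∀ a : k, Polynomial.eval (φ a) (g ^ d) = Polynomial.eval (φ a) (pF ^ m) := by
    intro a
    have hdet : Polynomial.eval (φ a) g = (φ a • αu + αv).det := by
      rw [hg, show Polynomial.eval (φ a) M.det = (Polynomial.evalRingHom (φ a)) M.det from rfl,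
        RingHom.map_det]
      congr 1
      ext i j
      show Polynomial.eval (φ a) (Polynomial.C (αu i j) * Polynomial.X + Polynomial.C (αv i j))
          = (φ a • αu + αv) i j
      rw [Matrix.add_apply, Matrix.smul_apply, smul_eq_mul, Polynomial.eval_add,
        Polynomial.eval_mul, Polynomial.eval_C, Polynomial.eval_X, Polynomial.eval_C, mul_comm]
    have hrel1 := hrel a 1
    rw [map_one, one_smul] at hrel1
    have hdetrel := congrArg Matrix.det hrel1
    rw [Matrix.det_pow, Matrix.det_smul, Matrix.det_one, mul_one, Fintype.card_fin] at hdetrel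
    have hevp : Polynomial.eval (φ a) pF = φ (Polynomial.eval a p) := by
      rw [hpF, Polynomial.eval_map, Polynomial.eval₂_at_apply]
    rw [Polynomial.eval_pow, Polynomial.eval_pow, hdet, hdetrel, hevp, hpdef, CliffordAux.eval_toPoly]
  have hgd : g ^ d = pF ^ m := by
    apply Polynomial.eq_of_infinite_eval_eq
    apply Set.Infinite.mono (s := Set.range φ)
    · rintro x ⟨a, rfl⟩
      exact heval a
    · exact Set.infinite_range_of_injective φ.injective
  set A := AlgebraicClosure F
  set ψ := algebraMap F A with hψdef
  set gA := g.map ψ with hgA'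
  set pA := pF.map ψ with hpA
  have hgApow : gA ^ d = pA ^ m := by
    rw [hgA', hpA, ← Polynomial.map_pow, ← Polynomial.map_pow, hgd]
  have hsepA : pA.Separable := by
    rw [hpA, hpF, Polynomial.map_map]
    exact hsep.map
  have hsfA : Squarefree pA := hsepA.squarefree
  have hndA : pA.natDegree = p.natDegree := by
    rw [hpA, hpF, Polynomial.map_map,
      Polynomial.natDegree_map_eq_of_injective (ψ.comp φ).injective]
  have hpA0 : pA ≠ 0 := by
    intro h
    rw [h, Polynomial.natDegree_zero] at hndA
    omega
  have hdegA : pA.degree ≠ 0 := by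
    rw [Polynomial.degree_eq_natDegree hpA0, hndA]
    intro h
    have : p.natDegree = 0 := by exact_mod_cast h
    omega
  obtain ⟨r, hroot⟩ := IsAlgClosed.exists_root pA hdegA
  have hgA0 : gA ≠ 0 := by
    intro h
    rw [h, zero_pow (by omega : d ≠ 0)] at hgApow
    exact hpA0 (pow_eq_zero_iff (by omega : m ≠ 0) |>.1 hgApow.symm)
  have hmul := congrArg (Polynomial.rootMultiplicity r) hgApow
  rw [CliffordAux.rootMultiplicity_pow' hgA0, CliffordAux.rootMultiplicity_pow' hpA0] at hmul
  have h1 : pA.rootMultiplicity r = 1 := by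
    refine le_antisymm ?_ ((Polynomial.rootMultiplicity_pos hpA0).2 hroot)
    by_contra hcon
    push_neg at hcon
    have hdvd2 : (Polynomial.X - Polynomial.C r) ^ 2 ∣ pA :=
      dvd_trans (pow_dvd_pow _ (by omega)) (Polynomial.pow_rootMultiplicity_dvd pA r)
    exact Polynomial.not_isUnit_X_sub_C r (hsfA _ (by rw [← sq]; exact hdvd2))
  rw [h1, mul_one] at hmul
  exact ⟨gA.rootMultiplicity r, hmul.symm⟩
end

section
/- Let R be a commutative ring and let A be an associative unital R-algebra that is finitely generated as an R-module. Let (a_i)_{i ∈ I} be a family of elements of A such that for every maximal ideal m of R, the images of the a_i in A/mA generate A/mA as an algebra over the residue field R/m. Then the a_i generate A as an R-algebra, i.e. the R-subalgebra of A generated by {a_i : i ∈ I} is all of A. -/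
/-- Let `A` be an associative unital algebra over a commutative ring `R`, finitely
generated as an `R`-module. If a family `(a i)` of elements of `A` generates `A / mA`
as an algebra over `R/m` for every maximal ideal `m` of `R` (i.e. every element of `A`
is congruent modulo the two-sided ideal `mA = m • ⊤` to an element of the `R`-subalgebra
generated by the `a i`), then the `a i` generate `A` as an `R`-algebra. -/
theorem adjoin_eq_top_of_generate_mod_all_maximal
    (R : Type*) [CommRing R] (A : Type*) [Ring A] [Algebra R A] [Module.Finite R A]
    {ι : Type*} (a : ι → A)
    (h : ∀ m : Ideal R, m.IsMaximal → ∀ x : A,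
      ∃ y ∈ Algebra.adjoin R (Set.range a), x - y ∈ (m • (⊤ : Submodule R A))) :
    Algebra.adjoin R (Set.range a) = ⊤ := by
  set S : Submodule R A := Subalgebra.toSubmodule (Algebra.adjoin R (Set.range a)) with hSdef
  suffices hS : S = ⊤ by
    rwa [← Algebra.toSubmodule_eq_top]
  by_contra hne
  set M := A ⧸ S with hMdef
  have hM : ∀ m : Ideal R, m.IsMaximal → (m • ⊤ : Submodule R M) = ⊤ := by
    intro m hm
    rw [eq_top_iff]
    rintro x -
    obtain ⟨x, rfl⟩ := S.mkQ_surjective x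
    obtain ⟨y, hy, hxy⟩ := h m hm x
    have h1 : S.mkQ (x - y) ∈ Submodule.map S.mkQ (m • (⊤ : Submodule R A)) :=
      Submodule.mem_map_of_mem hxy
    rw [Submodule.map_smul''] at h1
    have hxeq : S.mkQ x = S.mkQ (x - y) := by
      have hy0 : S.mkQ y = 0 := (Submodule.Quotient.mk_eq_zero S).2 hy
      rw [map_sub, hy0, sub_zero]
    rw [hxeq]
    exact Submodule.smul_mono le_rfl le_top h1
  have hM0 : ∃ x : M, x ≠ 0 := by
    by_contra h0
    push_neg at h0
    apply hne
    rw [eq_top_iff]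
    intro x _
    have hx := h0 (S.mkQ x)
    rwa [Submodule.mkQ_apply, Submodule.Quotient.mk_eq_zero] at hx
  obtain ⟨x, hx⟩ := hM0
  have hJ : Module.annihilator R M ≠ ⊤ := by
    intro hJ
    have h1 : (1 : R) ∈ Module.annihilator R M := hJ ▸ trivial
    have := Module.mem_annihilator.mp h1 x
    rw [one_smul] at this
    exact hx this
  obtain ⟨m, hm, hle⟩ := Ideal.exists_le_maximal _ hJ
  have hfg : (⊤ : Submodule R M).FG := Module.Finite.fg_top
  obtain ⟨r, hr1, hr0⟩ := Submodule.exists_sub_one_mem_and_smul_eq_zero_of_fg_of_le_smul m ⊤ hfg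
    (le_of_eq (hM m hm).symm)
  have hrann : r ∈ Module.annihilator R M :=
    Module.mem_annihilator.mpr fun z => hr0 z trivial
  have h1m : (1 : R) ∈ m := by
    have : r - (r - 1) ∈ m := m.sub_mem (hle hrann) hr1
    simpa using this
  exact hm.ne_top ((Ideal.eq_top_iff_one m).2 h1m)
end

section
/- Let R be a commutative local ring with maximal ideal m and let A be an associative unital R-algebra that is finitely generated as an R-module. Let (a_i)_{i ∈ I} be a family of elements of A whose images in A/mA generate A/mA as an algebra over the residue field R/m. Then the a_i generate A as an R-algebra. -/
/-- (Nakayama step) Let `R` be a commutative local ring with maximal ideal `m`, and `A`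
an associative unital `R`-algebra that is finitely generated as an `R`-module. If the
images of a family `(a i)` of elements of `A` generate `A / mA` as an algebra over the
residue field `R/m` (i.e. every element of `A` is congruent modulo the two-sided ideal
`mA = m • ⊤` to an element of the `R`-subalgebra generated by the `a i`), then the
`a i` generate `A` as an `R`-algebra. -/
theorem adjoin_eq_top_of_generate_mod_maximalIdeal
    (R : Type*) [CommRing R] [IsLocalRing R]
    (A : Type*) [Ring A] [Algebra R A] [Module.Finite R A]
    {ι : Type*} (a : ι → A)
    (h : ∀ x : A, ∃ y ∈ Algebra.adjoin R (Set.range a),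
      x - y ∈ (IsLocalRing.maximalIdeal R • (⊤ : Submodule R A))) :
    Algebra.adjoin R (Set.range a) = ⊤ := by
  have key : (⊤ : Submodule R A) ≤ Subalgebra.toSubmodule (Algebra.adjoin R (Set.range a)) := by
    apply Submodule.le_of_le_smul_of_le_jacobson_bot Module.Finite.fg_top
      (IsLocalRing.maximalIdeal_le_jacobson ⊥)
    intro x _
    obtain ⟨y, hy, hxy⟩ := h x
    have : x = y + (x - y) := by abel
    rw [this]
    exact Submodule.add_mem _ (Submodule.mem_sup_left hy) (Submodule.mem_sup_right hxy)
  exact top_le_iff.mp (fun x _ => key trivial)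
end

section
/- Let K be a field, let f ∈ K[u,v] be a nonzero homogeneous polynomial of degree d ≥ 1, let r ≥ 1, and set n = rd. Let α_u, α_v ∈ M_n(K) be matrices such that the matrix W = u•ᾱ_u + v•ᾱ_v ∈ M_n(K[u,v]) satisfies W^d = f•1 (where ᾱ_u, ᾱ_v are the entrywise images of α_u, α_v in M_n(K[u,v]) and f is viewed in K[u,v]). Then there exists c ∈ K with c^d = 1 such that det W = c • f^r in K[u,v]. -/
open MvPolynomial

/-- If `u * h` is homogeneous of degree `n` where `h` is nonzero homogeneous of degree `n`,
then `u` is a constant. -/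
lemma aux_const_of_mul_homogeneous {K : Type*} [Field K] {n : ℕ}
    {h u : MvPolynomial (Fin 2) K} (hh : h.IsHomogeneous n) (hne : h ≠ 0)
    (hg : (h * u).IsHomogeneous n) : u = C (coeff 0 u) := by
  have key : ∀ k, k ≠ 0 → homogeneousComponent k u = 0 := by
    intro k hk
    by_cases hkD : u.totalDegree < k
    · exact homogeneousComponent_eq_zero k u hkD
    push_neg at hkD
    have hu : u = ∑ i ∈ Finset.range (u.totalDegree + 1), homogeneousComponent i u :=
      (sum_homogeneousComponent u).symm
    have e1 : homogeneousComponent (n + k) (h * u) = h * homogeneousComponent k u := by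
      conv_lhs => rw [hu, Finset.mul_sum, map_sum]
      rw [Finset.sum_eq_single k]
      · rw [homogeneousComponent_of_mem
          ((mem_homogeneousSubmodule _ _).mpr
            (hh.mul (homogeneousComponent_isHomogeneous k u)))]
        simp
      · intro i _ hik
        rw [homogeneousComponent_of_mem
          ((mem_homogeneousSubmodule _ _).mpr
            (hh.mul (homogeneousComponent_isHomogeneous i u))),
          if_neg (by omega)]
      · intro hkmem
        exact absurd (Finset.mem_range.mpr (Nat.lt_succ_of_le hkD)) hkmem
    have e2 : homogeneousComponent (n + k) (h * u) = 0 := by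
      rw [homogeneousComponent_of_mem ((mem_homogeneousSubmodule _ _).mpr hg),
        if_neg (by omega)]
    rcases mul_eq_zero.mp (e1.symm.trans e2) with h0 | h0
    · exact absurd h0 hne
    · exact h0
  have hu : u = ∑ i ∈ Finset.range (u.totalDegree + 1), homogeneousComponent i u :=
    (sum_homogeneousComponent u).symm
  rw [hu, Finset.sum_eq_single 0]
  · rw [homogeneousComponent_zero]
    congr 1
    conv_rhs => rw [hu]
    rw [coeff_sum]
    rw [Finset.sum_eq_single 0]
    · simp [coeff_homogeneousComponent]
    · intro i _ hik
      rw [key i hik]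
      simp
    · intro habs
      exact absurd (Finset.mem_range.mpr (Nat.succ_pos _)) habs
  · intro i _ hik
    exact key i hik
  · intro habs
    exact absurd (Finset.mem_range.mpr (Nat.succ_pos _)) habs

/-- If `f` is a nonzero binary form of degree `d ≥ 1` over a field `K`, `n = r * d`, and
the matrix pencil `W = u•ᾱ_u + v•ᾱ_v ∈ M_n(K[u,v])` satisfies `W ^ d = f • 1`, then
`det W = c • f ^ r` for some `d`-th root of unity `c ∈ K`. -/
theorem det_pencil_of_clifford_relations
    (K : Type*) [Field K] (d r : ℕ) (hd : 1 ≤ d) (hr : 1 ≤ r)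
    (f : MvPolynomial (Fin 2) K) (hf0 : f ≠ 0) (hf : f.IsHomogeneous d)
    (αu αv : Matrix (Fin (r * d)) (Fin (r * d)) K)
    (W : Matrix (Fin (r * d)) (Fin (r * d)) (MvPolynomial (Fin 2) K))
    (hW : W = (X 0 : MvPolynomial (Fin 2) K) • αu.map MvPolynomial.C +
        (X 1 : MvPolynomial (Fin 2) K) • αv.map MvPolynomial.C)
    (hrel : W ^ d = f • (1 : Matrix (Fin (r * d)) (Fin (r * d)) (MvPolynomial (Fin 2) K))) :
    ∃ c : K, c ^ d = 1 ∧ W.det = c • f ^ r := by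
  classical
  have hd0 : d ≠ 0 := by omega
  -- det W ^ d = (f ^ r) ^ d
  have hdet : W.det ^ d = (f ^ r) ^ d := by
    have h1 := congrArg Matrix.det hrel
    rw [Matrix.det_pow, Matrix.det_smul, Matrix.det_one, mul_one] at h1
    rw [h1, ← pow_mul]
    simp [mul_comm]
  have hfr0 : f ^ r ≠ 0 := pow_ne_zero _ hf0
  have hfrd0 : (f ^ r) ^ d ≠ 0 := pow_ne_zero _ hfr0
  have hg0 : W.det ≠ 0 := by
    intro h0
    rw [h0, zero_pow hd0] at hdet
    exact hfrd0 hdet.symm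
  -- det W is associated to f ^ r
  letI : NormalizationMonoid (MvPolynomial (Fin 2) K) :=
    UniqueFactorizationMonoid.normalizationMonoid.toNormalizationMonoid
  have hassoc : Associated W.det (f ^ r) := by
    rw [UniqueFactorizationMonoid.associated_iff_normalizedFactors_eq_normalizedFactors hg0 hfr0]
    have h1 := UniqueFactorizationMonoid.normalizedFactors_pow (x := W.det) d
    rw [hdet, UniqueFactorizationMonoid.normalizedFactors_pow] at h1
    refine Multiset.ext.mpr fun p => ?_
    have h2 := congrArg (Multiset.count p) h1
    rw [Multiset.count_nsmul, Multiset.count_nsmul] at h2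
    exact (Nat.eq_of_mul_eq_mul_left hd h2).symm
  obtain ⟨w, hw⟩ := hassoc.symm
  -- hw : f ^ r * ↑w = W.det
  -- homogeneity of det W
  have hWentry : ∀ i j, (W i j).IsHomogeneous 1 := by
    intro i j
    rw [hW]
    simp only [Matrix.add_apply, Matrix.smul_apply, Matrix.map_apply, smul_eq_mul]
    have h1 : ((X 0 : MvPolynomial (Fin 2) K) * C (αu i j)).IsHomogeneous 1 := by
      simpa using (isHomogeneous_X K (0 : Fin 2)).mul (isHomogeneous_C (Fin 2) (αu i j))
    have h2 : ((X 1 : MvPolynomial (Fin 2) K) * C (αv i j)).IsHomogeneous 1 := by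
      simpa using (isHomogeneous_X K (1 : Fin 2)).mul (isHomogeneous_C (Fin 2) (αv i j))
    exact h1.add h2
  have hdethom : W.det.IsHomogeneous (r * d) := by
    rw [Matrix.det_apply]
    apply MvPolynomial.IsHomogeneous.sum
    intro σ _
    have hp : (∏ i, W (σ i) i).IsHomogeneous (r * d) := by
      have := MvPolynomial.IsHomogeneous.prod Finset.univ (fun i => W (σ i) i) (fun _ => 1)
        (fun i _ => hWentry _ _)
      simpa using this
    rcases Int.units_eq_one_or (Equiv.Perm.sign σ) with hs | hs <;> rw [hs]
    · simpa using hp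
    · have : ((-1 : ℤˣ) • ∏ i, W (σ i) i) = -∏ i, W (σ i) i := by
        rw [Units.smul_def]
        simp
      rw [this]
      exact hp.neg
  -- the unit is a constant
  have hfrhom : (f ^ r).IsHomogeneous (r * d) := by
    have := hf.pow r
    rwa [mul_comm] at this
  have hmulhom : ((f ^ r) * (w : MvPolynomial (Fin 2) K)).IsHomogeneous (r * d) := by
    rwa [hw]
  have hwC : (w : MvPolynomial (Fin 2) K) = C (coeff 0 (w : MvPolynomial (Fin 2) K)) :=
    aux_const_of_mul_homogeneous hfrhom hfr0 hmulhom
  set c : K := coeff 0 (w : MvPolynomial (Fin 2) K) with hc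
  refine ⟨c, ?_, ?_⟩
  · -- c ^ d = 1
    have h1 : (f ^ r) ^ d * (C c : MvPolynomial (Fin 2) K) ^ d = (f ^ r) ^ d * 1 := by
      rw [mul_one, ← mul_pow, ← hwC, hw, hdet]
    have h2 := mul_left_cancel₀ hfrd0 h1
    rw [← C_pow, ← C_1] at h2
    exact C_injective _ _ h2
  · rw [← hw, hwC, smul_eq_C_mul, mul_comm]
end

section
/- Let K be an algebraically closed field whose characteristic does not divide d, let f ∈ K[u,v] be a squarefree binary form of degree d (no repeated linear factors), let r ≥ 1, and let α_u, α_v ∈ M_{rd}(K) satisfy the Clifford relations (a•α_u + b•α_v)^d = f(a,b)•1 for all a, b ∈ K. Then for every (a,b) ∈ K² with (a,b) ≠ (0,0) and f(a,b) = 0, the matrix a•α_u + b•α_v is nilpotent with (a•α_u + b•α_v)^d = 0, and the dimension of its kernel is at most r. -/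
open MvPolynomial

section Aux

lemma aux_det_dvd_of_rows {n : Type*} [DecidableEq n] [Fintype n] {R : Type*} [CommRing R]
    (x : R) (S : Finset n) :
    ∀ (A : Matrix n n R), (∀ i ∈ S, ∃ v, A i = x • v) → x ^ S.card ∣ A.det := by
  classical
  induction S using Finset.induction_on with
  | empty => simp
  | @insert i S hi ih =>
    intro A hA
    obtain ⟨v, hv⟩ := hA i (Finset.mem_insert_self i S)
    have h1 : A = A.updateRow i (x • v) := by rw [← hv, Matrix.updateRow_eq_self]
    rw [Finset.card_insert_of_notMem hi, h1, Matrix.det_updateRow_smul, pow_succ']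
    refine mul_dvd_mul_left x (ih _ ?_)
    intro j hj
    rcases hA j (Finset.mem_insert_of_mem hj) with ⟨w, hw⟩
    exact ⟨w, by rw [Matrix.updateRow_ne (by rintro rfl; exact hi hj), hw]⟩

lemma aux_rootMultiplicity_pow {K : Type*} [Field K] {p : Polynomial K} (hp : p ≠ 0)
    (x : K) (k : ℕ) : (p ^ k).rootMultiplicity x = k * p.rootMultiplicity x := by
  induction k with
  | zero => simp [Polynomial.rootMultiplicity_eq_zero_iff]
  | succ k ih =>
    rw [pow_succ, Polynomial.rootMultiplicity_mul (mul_ne_zero (pow_ne_zero _ hp) hp), ih]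
    ring

lemma aux_supp_deg {K : Type*} [Field K] {d : ℕ} {F : MvPolynomial (Fin 2) K}
    (hF : F.IsHomogeneous d) {m : Fin 2 →₀ ℕ} (hm : m ∈ F.support) : m 0 + m 1 = d := by
  have h1 : m.degree = d := by
    by_contra h
    exact (MvPolynomial.mem_support_iff.mp hm) (hF.coeff_eq_zero h)
  rw [← h1, Finsupp.degree_apply]
  rw [Finset.sum_subset (Finset.subset_univ m.support)
    (fun i _ hi => Finsupp.notMem_support_iff.mp hi)]
  exact (Fin.sum_univ_two m).symm

lemma aux_eval_form {K : Type*} [Field K] (F : MvPolynomial (Fin 2) K) (k : ℕ) :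
    (MvPolynomial.aeval ![1, Polynomial.X] F : Polynomial K).coeff k
      = ∑ m ∈ F.support, if k = m 1 then F.coeff m else 0 := by
  conv_lhs => rw [F.as_sum]
  rw [map_sum, Polynomial.finset_sum_coeff]
  refine Finset.sum_congr rfl fun m _ => ?_
  rw [aeval_monomial]
  have hprod : (m.prod fun i e => (![1, Polynomial.X] i : Polynomial K) ^ e)
      = Polynomial.X ^ (m 1) := by
    rw [Finsupp.prod_fintype _ _ (fun i => pow_zero _), Fin.prod_univ_two]
    simp
  rw [hprod]
  have : (algebraMap K (Polynomial K)) (F.coeff m) = Polynomial.C (F.coeff m) := rfl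
  rw [this, Polynomial.coeff_C_mul, Polynomial.coeff_X_pow, mul_ite, mul_one, mul_zero]

lemma aux_X1_sq_dvd {K : Type*} [Field K] {d : ℕ} {F : MvPolynomial (Fin 2) K}
    (hF : F.IsHomogeneous d)
    (h2 : (Polynomial.X : Polynomial K)^2 ∣ MvPolynomial.aeval ![1, Polynomial.X] F) :
    (MvPolynomial.X 1 : MvPolynomial (Fin 2) K)^2 ∣ F := by
  classical
  have hsupp : ∀ m ∈ F.support, 2 ≤ m 1 := by
    intro m hm
    by_contra h
    push_neg at h
    interval_cases hk : (m 1)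
    all_goals {
      obtain ⟨Q, hQ⟩ := h2
      have hc : (MvPolynomial.aeval ![1, Polynomial.X] F : Polynomial K).coeff (m 1) = 0 := by
        rw [hQ, hk]
        simp [Polynomial.coeff_X_pow_mul']
      rw [aux_eval_form, Finset.sum_eq_single_of_mem m hm] at hc
      · simp at hc
        exact (MvPolynomial.mem_support_iff.mp hm) hc
      · intro m' hm' hne
        rw [if_neg]
        intro he
        apply hne
        have h1 := aux_supp_deg hF hm
        have h2' := aux_supp_deg hF hm'
        ext i
        fin_cases i
        · show m' 0 = m 0; omega
        · show m' 1 = m 1; omega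
    }
  refine ⟨∑ m ∈ F.support, monomial (m - Finsupp.single 1 2) (F.coeff m), ?_⟩
  conv_lhs => rw [F.as_sum]
  rw [Finset.mul_sum]
  refine Finset.sum_congr rfl fun m hm => ?_
  rw [MvPolynomial.X_pow_eq_monomial, monomial_mul, one_mul]
  congr 1
  have hle : Finsupp.single 1 2 ≤ m := by
    rw [Finsupp.single_le_iff]
    exact hsupp m hm
  rw [add_tsub_cancel_of_le hle]

end Aux

/-- For an `rd`-dimensional representation of the Clifford algebra of a squarefree binary
form `f` of degree `d` over an algebraically closed field `K` with `char K ∤ d`: at every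
`(a,b) ≠ (0,0)` with `f(a,b) = 0`, the matrix `a•α_u + b•α_v` is nilpotent with `d`-th
power zero, and its kernel has dimension at most `r`. -/
theorem nilpotent_and_kernel_le_of_clifford_rep
    (K : Type*) [Field K] [IsAlgClosed K]
    (d r : ℕ) (hr : 1 ≤ r) (hchar : (d : K) ≠ 0)
    (f : MvPolynomial (Fin 2) K) (hf : f.IsHomogeneous d) (hsf : Squarefree f)
    (αu αv : Matrix (Fin (r * d)) (Fin (r * d)) K)
    (hrel : ∀ a b : K,
      (a • αu + b • αv) ^ d =
        eval ![a, b] f • (1 : Matrix (Fin (r * d)) (Fin (r * d)) K)) :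
    ∀ a b : K, ¬ (a = 0 ∧ b = 0) → eval ![a, b] f = 0 →
      IsNilpotent (a • αu + b • αv) ∧ (a • αu + b • αv) ^ d = 0 ∧
      Module.finrank K (LinearMap.ker ((a • αu + b • αv).mulVecLin)) ≤ r := by
  classical
  intro a b hab hf0
  have hd : d ≠ 0 := by rintro rfl; exact hchar (by norm_num)
  set α : Matrix (Fin (r * d)) (Fin (r * d)) K := a • αu + b • αv with hα
  have hαd : α ^ d = 0 := by rw [hrel a b, hf0, zero_smul]
  refine ⟨⟨d, hαd⟩, hαd, ?_⟩
  -- auxiliary direction (a', b')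
  obtain ⟨a', b', hD⟩ : ∃ a' b' : K, a * b' - a' * b = -1 := by
    by_cases hb : b = 0
    · have ha : a ≠ 0 := fun h => hab ⟨h, hb⟩
      exact ⟨0, -a⁻¹, by field_simp; ring⟩
    · exact ⟨b⁻¹, 0, by field_simp; ring⟩
  set β : Matrix (Fin (r * d)) (Fin (r * d)) K := a' • αu + b' • αv with hβ
  -- the substituted polynomial F and the univariate G
  set σg : Fin 2 → MvPolynomial (Fin 2) K :=
    ![C a * X 0 + C a' * X 1, C b * X 0 + C b' * X 1] with hσg
  set F : MvPolynomial (Fin 2) K := MvPolynomial.aeval σg f with hF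
  have hFhom : F.IsHomogeneous d := by
    have := hf.aeval σg (n := 1) ?_
    · rwa [one_mul] at this
    · intro i
      fin_cases i <;>
        exact (((isHomogeneous_X K _).C_mul _).add ((isHomogeneous_X K _).C_mul _))
  set G : Polynomial K := MvPolynomial.aeval ![1, Polynomial.X] F with hG
  -- evaluation formula for G
  have key : ∀ t : K, G.eval t = eval ![a + a' * t, b + b' * t] f := by
    intro t
    have hcomp : (Polynomial.aeval t : Polynomial K →ₐ[K] K).comp
        ((MvPolynomial.aeval ![1, Polynomial.X]).comp (MvPolynomial.aeval σg))
        = MvPolynomial.aeval ![a + a' * t, b + b' * t] := by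
      apply MvPolynomial.algHom_ext
      intro i
      fin_cases i <;> simp [hσg]
    have h1 := DFunLike.congr_fun hcomp f
    simp only [AlgHom.comp_apply] at h1
    have h2 : Polynomial.aeval t G = Polynomial.eval t G := by
      rw [Polynomial.aeval_def, Polynomial.eval, Algebra.algebraMap_self]
    have h3 : MvPolynomial.aeval ![a + a' * t, b + b' * t] f
        = eval ![a + a' * t, b + b' * t] f := by
      simp [MvPolynomial.aeval_def, Algebra.algebraMap_self]
    rw [← h2, hG, hF, ← h3, ← h1]
  -- X ∣ G
  have hXdvd : Polynomial.X ∣ G := by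
    rw [Polynomial.X_dvd_iff, Polynomial.coeff_zero_eq_eval_zero, key 0]
    have hv : ![a + a' * 0, b + b' * 0] = ![a, b] := by
      funext i; fin_cases i <;> simp
    rw [hv, hf0]
  -- ¬ X^2 ∣ G
  have hX2 : ¬ (Polynomial.X : Polynomial K) ^ 2 ∣ G := by
    intro h
    have hdvdF := aux_X1_sq_dvd hFhom h
    -- pull back along the inverse substitution
    set τg : Fin 2 → MvPolynomial (Fin 2) K :=
      ![-(C b') * X 0 + C a' * X 1, C b * X 0 - C a * X 1] with hτg
    have hDC : (C a : MvPolynomial (Fin 2) K) * C b' - C a' * C b = -1 := by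
      rw [← C_mul, ← C_mul, ← C_sub, hD]
      simp
    have hBA : MvPolynomial.aeval τg F = f := by
      have hcomp : (MvPolynomial.aeval τg).comp (MvPolynomial.aeval σg)
          = (AlgHom.id K (MvPolynomial (Fin 2) K)) := by
        apply MvPolynomial.algHom_ext
        intro i
        rw [AlgHom.comp_apply, AlgHom.id_apply, MvPolynomial.aeval_X]
        fin_cases i
        · simp only [hσg, hτg, map_add, map_mul, map_neg, map_sub, aeval_X, aeval_C, MvPolynomial.algebraMap_eq,
            Fin.isValue, Fin.zero_eta, Fin.mk_one, Matrix.cons_val_zero, Matrix.cons_val_one,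
            Matrix.head_cons]
          linear_combination (-(X 0 : MvPolynomial (Fin 2) K)) * hDC
        · simp only [hσg, hτg, map_add, map_mul, map_neg, map_sub, aeval_X, aeval_C, MvPolynomial.algebraMap_eq,
            Fin.isValue, Fin.zero_eta, Fin.mk_one, Matrix.cons_val_zero, Matrix.cons_val_one,
            Matrix.head_cons]
          linear_combination (-(X 1 : MvPolynomial (Fin 2) K)) * hDC
      have := DFunLike.congr_fun hcomp f
      simpa [hF] using this
    have hℓ : (MvPolynomial.aeval τg (X 1 : MvPolynomial (Fin 2) K)) ^ 2 ∣ f := by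
      rw [← hBA, ← map_pow]
      exact map_dvd _ hdvdF
    set ℓ : MvPolynomial (Fin 2) K := C b * X 0 - C a * X 1 with hℓdef
    have hℓ' : ℓ * ℓ ∣ f := by
      rw [← sq]
      convert hℓ using 2
      simp [hτg]
    have hunit := hsf ℓ hℓ'
    have h0 : eval ![a, b] ℓ = 0 := by
      rw [hℓdef]
      simp [mul_comm]
    have := hunit.map (eval ![a, b])
    rw [h0] at this
    exact not_isUnit_zero this
  have hGne : G ≠ 0 := fun h => hX2 (h ▸ dvd_zero _)
  -- root multiplicity of G at 0 is 1
  have hμG : G.rootMultiplicity 0 = 1 := by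
    refine le_antisymm ?_ ?_
    · rw [Polynomial.rootMultiplicity_le_iff hGne]
      simpa using hX2
    · rw [Polynomial.le_rootMultiplicity_iff hGne]
      simpa using hXdvd
  -- matrix with polynomial entries
  have hn0 : r * d ≠ 0 := Nat.mul_ne_zero (by omega) hd
  set M : Matrix (Fin (r * d)) (Fin (r * d)) (Polynomial K) :=
    α.map Polynomial.C + (Polynomial.X : Polynomial K) • β.map Polynomial.C with hM
  have hMeval : ∀ t : K, M.map (Polynomial.eval t)
      = (a + a' * t) • αu + (b + b' * t) • αv := by
    intro t
    ext i j
    simp [hM, hα, hβ, Matrix.map_apply, Matrix.add_apply, Matrix.smul_apply]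
    ring
  have hMd : M ^ d = G • (1 : Matrix (Fin (r * d)) (Fin (r * d)) (Polynomial K)) := by
    have hentry : ∀ t : K, (M ^ d).map (Polynomial.eval t)
        = (G • (1 : Matrix (Fin (r * d)) (Fin (r * d)) (Polynomial K))).map
            (Polynomial.eval t) := by
      intro t
      have h3 : (M ^ d).map (Polynomial.eval t) = (M.map (Polynomial.eval t)) ^ d := by
        have := map_pow ((Polynomial.evalRingHom t).mapMatrix) M d
        simpa [RingHom.mapMatrix_apply, Polynomial.coe_evalRingHom] using this
      rw [h3, hMeval, hrel, ← key]
      ext i j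
      by_cases hij : i = j <;>
        simp [Matrix.smul_apply, Matrix.one_apply, Matrix.map_apply, hij]
    refine Matrix.ext fun i j => ?_
    apply Polynomial.funext
    intro t
    have := congrFun (congrFun (hentry t) i) j
    simpa [Matrix.map_apply] using this
  have hdet : M.det ^ d = G ^ (r * d) := by
    rw [← Matrix.det_pow, hMd, Matrix.det_smul, Matrix.det_one, mul_one, Fintype.card_fin]
  have hdet0 : M.det ≠ 0 := by
    intro h
    apply hGne
    have h1 : G ^ (r * d) = 0 := by rw [← hdet, h, zero_pow hd]
    exact pow_eq_zero_iff hn0 |>.mp h1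
  have hμdet : M.det.rootMultiplicity 0 = r := by
    have h1 : (M.det ^ d).rootMultiplicity 0 = (G ^ (r * d)).rootMultiplicity 0 := by
      rw [hdet]
    rw [aux_rootMultiplicity_pow hdet0, aux_rootMultiplicity_pow hGne, hμG, mul_one] at h1
    exact Nat.eq_of_mul_eq_mul_left (Nat.pos_of_ne_zero hd) (h1.trans (mul_comm r d))
  set W := LinearMap.ker α.mulVecLin with hW
  set k := Module.finrank K W with hkdef
  suffices hk : (Polynomial.X : Polynomial K) ^ k ∣ M.det by
    have h2 : k ≤ M.det.rootMultiplicity 0 :=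
      (Polynomial.le_rootMultiplicity_iff hdet0).mpr (by simpa using hk)
    rw [hμdet] at h2
    exact h2
  -- build an invertible matrix whose first k columns span the kernel
  obtain ⟨W', hcompl⟩ := Submodule.exists_isCompl W
  let b1 : Module.Basis (Fin k) K W := Module.finBasis K W
  let b2 : Module.Basis (Fin (Module.finrank K W')) K W' := Module.finBasis K W'
  let B : Module.Basis (Fin k ⊕ Fin (Module.finrank K W')) K (Fin (r * d) → K) :=
    (b1.prod b2).map (Submodule.prodEquivOfIsCompl W W' hcompl)
  let e2 := B.indexEquiv (Pi.basisFun K (Fin (r * d)))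
  let B' := B.reindex e2
  let P : Matrix (Fin (r * d)) (Fin (r * d)) K := (Pi.basisFun K (Fin (r * d))).toMatrix B'
  have hPunit : IsUnit P.det := by
    have := (Pi.basisFun K (Fin (r * d))).invertibleToMatrix B'
    exact Matrix.isUnit_det_of_invertible P
  have hPmem : ∀ i : Fin k, (fun l => P l (e2 (Sum.inl i))) ∈ W := by
    intro i
    have hcol : (fun l => P l (e2 (Sum.inl i))) = B' (e2 (Sum.inl i)) := by
      funext l
      simp [P, Module.Basis.toMatrix_apply, Pi.basisFun_repr]
    have hB : B (Sum.inl i) = (b1 i : Fin (r * d) → K) := by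
      simp [B, Module.Basis.map_apply, Module.Basis.prod_apply, Submodule.coe_prodEquivOfIsCompl']
    rw [hcol]
    have : B' (e2 (Sum.inl i)) = B (Sum.inl i) := by
      simp [B', Module.Basis.reindex_apply, Equiv.symm_apply_apply]
    rw [this, hB]
    exact (b1 i).2
  set S : Finset (Fin (r * d)) :=
    Finset.image (fun i : Fin k => e2 (Sum.inl i)) Finset.univ with hS
  have hScard : S.card = k := by
    rw [hS, Finset.card_image_of_injective _
        (fun x y h => Sum.inl_injective (e2.injective h)),
      Finset.card_univ, Fintype.card_fin]
  have hdvd2 : (Polynomial.X : Polynomial K) ^ S.card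
      ∣ ((M * P.map Polynomial.C).transpose).det := by
    apply aux_det_dvd_of_rows
    intro j hj
    rw [hS, Finset.mem_image] at hj
    obtain ⟨i, -, rfl⟩ := hj
    have hker : α.mulVec (fun l => P l (e2 (Sum.inl i))) = 0 := by
      have := hPmem i
      rwa [hW, LinearMap.mem_ker, Matrix.mulVecLin_apply] at this
    refine ⟨fun i' => ∑ l, Polynomial.C (β i' l * P l (e2 (Sum.inl i))), ?_⟩
    funext i'
    have expand : (M * P.map Polynomial.C) i' (e2 (Sum.inl i)) =
        Polynomial.C ((α.mulVec (fun l => P l (e2 (Sum.inl i)))) i')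
          + Polynomial.X * ∑ l, Polynomial.C (β i' l * P l (e2 (Sum.inl i))) := by
      rw [Matrix.mul_apply, Matrix.mulVec, dotProduct, map_sum, Finset.mul_sum,
        ← Finset.sum_add_distrib]
      refine Finset.sum_congr rfl fun l _ => ?_
      simp [hM, Matrix.add_apply, Matrix.smul_apply, Matrix.map_apply]
      ring
    rw [Matrix.transpose_apply, expand, hker]
    simp [Pi.smul_apply, smul_eq_mul]
  rw [Matrix.det_transpose, Matrix.det_mul, hScard] at hdvd2
  have hCP : (P.map Polynomial.C).det = Polynomial.C P.det := by
    have := RingHom.map_det (Polynomial.C : K →+* Polynomial K) P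
    rw [RingHom.mapMatrix_apply] at this
    exact this.symm
  rw [hCP] at hdvd2
  refine hdvd2.trans ?_
  obtain ⟨u, hu⟩ := hPunit.map (Polynomial.C : K →+* Polynomial K)
  exact ⟨(↑u⁻¹ : Polynomial K), by rw [← hu, mul_assoc, Units.mul_inv, mul_one]⟩
end

section
/- Let K be an algebraically closed field whose characteristic does not divide d, let f ∈ K[u,v] be a squarefree binary form of degree d (no repeated linear factors), let r ≥ 1, and let α_u, α_v ∈ M_{rd}(K) satisfy the Clifford relations (a•α_u + b•α_v)^d = f(a,b)•1 for all a, b ∈ K. Then for every (a,b) ∈ K², the characteristic polynomial of the matrix a•α_u + b•α_v equals (X^d − f(a,b))^r. -/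
set_option maxHeartbeats 1000000
set_option synthInstance.maxHeartbeats 400000

section Aux
open Polynomial


lemma eq_pow_of_forall_irreducible {F : Type*} [Field F] (Q : F[X]) (hQm : Q.Monic)
    (hQd : 0 < Q.natDegree) :
    ∀ (k : ℕ) (P : F[X]), P.natDegree ≤ k → P.Monic →
      (∀ p : F[X], Irreducible p → p ∣ P → Q ∣ p) → ∃ e, P = Q ^ e := by
  intro k
  induction k with
  | zero =>
    intro P hk hPm _
    exact ⟨0, by rw [pow_zero, ← hPm.natDegree_eq_zero]; omega⟩
  | succ k ih =>
    intro P hk hPm hfac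
    by_cases h0 : P.natDegree = 0
    · exact ⟨0, by rw [pow_zero, ← hPm.natDegree_eq_zero]; omega⟩
    · have hPnu : ¬ IsUnit P := by
        intro h
        exact h0 (Polynomial.natDegree_eq_zero_of_isUnit h)
      obtain ⟨i, hi, hiP⟩ := WfDvdMonoid.exists_irreducible_factor hPnu hPm.ne_zero
      have hQP : Q ∣ P := (hfac i hi hiP).trans hiP
      obtain ⟨P₁, hP₁⟩ := hQP
      have hP₁m : P₁.Monic := hQm.of_mul_monic_left (hP₁ ▸ hPm)
      have hdeg : P.natDegree = Q.natDegree + P₁.natDegree := by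
        rw [hP₁, Polynomial.natDegree_mul hQm.ne_zero hP₁m.ne_zero]
      obtain ⟨e, he⟩ := ih P₁ (by omega) hP₁m
        (fun p hp hpP₁ => hfac p hp (hpP₁.trans ⟨Q, by rw [hP₁, mul_comm]⟩))
      exact ⟨e + 1, by rw [hP₁, he, pow_succ, mul_comm]⟩


lemma charpoly_eq_pow_of_pow_eq_smul_one {F : Type*} [Field F] {d r : ℕ} (hd : d ≠ 0) (c : F)
    (hirr : Irreducible (X ^ d - C c : F[X]))
    (M : Matrix (Fin (r * d)) (Fin (r * d)) F) (hM : M ^ d = c • 1) :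
    M.charpoly = (X ^ d - C c) ^ r := by
  set Q : F[X] := X ^ d - C c with hQ
  have hQm : Q.Monic := monic_X_pow_sub_C c hd
  have hQdeg : Q.natDegree = d := natDegree_X_pow_sub_C
  -- every irreducible factor of the charpoly is divisible by Q
  have hfac : ∀ p : F[X], Irreducible p → p ∣ M.charpoly → Q ∣ p := by
    intro p hp hpP
    have hpne : p ≠ 0 := hp.ne_zero
    set p' : F[X] := p * C p.leadingCoeff⁻¹ with hp'def
    have hp'm : p'.Monic := monic_mul_leadingCoeff_inv hpne
    have hassoc : Associated p p' := by
      refine associated_mul_unit_right p _ ?_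
      exact isUnit_C.mpr (IsUnit.inv (isUnit_iff_ne_zero.mpr (leadingCoeff_ne_zero.mpr hpne)))
    have hp' : Irreducible p' := hassoc.irreducible hp
    have hp'P : p' ∣ M.charpoly := (hassoc.symm.dvd).trans hpP
    haveI : Fact (Irreducible p') := ⟨hp'⟩
    set L := AdjoinRoot p'
    set lam : L := AdjoinRoot.root p'
    set MM : Matrix (Fin (r * d)) (Fin (r * d)) L := M.map (algebraMap F L) with hMM
    have hchar : MM.charpoly = M.charpoly.map (algebraMap F L) :=
      Matrix.charpoly_map M (algebraMap F L)
    -- lam is a root of the charpoly of MM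
    have hroot : MM.charpoly.eval lam = 0 := by
      rw [hchar]
      obtain ⟨s, hs⟩ := hp'P
      rw [hs, Polynomial.map_mul, eval_mul, eval_map, ← aeval_def]
      rw [AdjoinRoot.aeval_eq, AdjoinRoot.mk_self, zero_mul]
    -- hence an eigenvector exists
    have hdet : (Matrix.diagonal (fun _ : Fin (r * d) => lam) - MM).det = 0 := by
      have h1 : (Matrix.diagonal (fun _ : Fin (r * d) => lam) - MM)
          = (MM.charmatrix).map (evalRingHom lam) := by
        ext i j
        by_cases h : i = j <;>
          simp [Matrix.charmatrix_apply, Matrix.diagonal, h, Matrix.sub_apply]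
      rw [h1, ← RingHom.mapMatrix_apply, ← RingHom.map_det]
      simpa [Matrix.charpoly] using hroot
    obtain ⟨v, hv0, hv⟩ := (Matrix.exists_mulVec_eq_zero_iff).mpr hdet
    have hvEig : MM.mulVec v = lam • v := by
      have h2 := hv
      rw [Matrix.sub_mulVec, sub_eq_zero] at h2
      have hdiag : (Matrix.diagonal (fun _ : Fin (r * d) => lam)).mulVec v = lam • v := by
        ext i
        simp [Matrix.mulVec_diagonal, Pi.smul_apply, smul_eq_mul]
      rw [← h2, hdiag]
    -- powers act by powers of the eigenvalue
    have hpow : ∀ k : ℕ, (MM ^ k).mulVec v = (lam ^ k) • v := by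
      intro k
      induction k with
      | zero => simp
      | succ k ih =>
        rw [pow_succ, ← Matrix.mulVec_mulVec, hvEig, Matrix.mulVec_smul, ih,
          smul_smul, ← pow_succ']
    -- and MM ^ d is scalar
    have hMMd : MM ^ d = (algebraMap F L c) • 1 := by
      have h3 : MM = (algebraMap F L).mapMatrix M := rfl
      rw [h3, ← map_pow, hM]
      ext i j
      by_cases h : i = j <;>
        simp [RingHom.mapMatrix_apply, Matrix.map_apply, Matrix.smul_apply, Matrix.one_apply, h]
    have hlamd : lam ^ d = algebraMap F L c := by
      obtain ⟨i, hi⟩ := Function.ne_iff.mp hv0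
      have hi' : v i ≠ 0 := by simpa using hi
      have hsc : (lam ^ d) • v = (algebraMap F L c) • v := by
        rw [← hpow d, hMMd, Matrix.smul_mulVec, Matrix.one_mulVec]
      have h5 := congrFun hsc i
      simp only [Pi.smul_apply, smul_eq_mul] at h5
      exact mul_right_cancel₀ hi' h5
    -- lam is a root of Q, so its minimal polynomial p' divides Q
    have hQlam : Polynomial.aeval lam Q = 0 := by
      rw [hQ]
      simp [hlamd]
    have hmin : minpoly F lam = p' := by
      have := AdjoinRoot.minpoly_root hp'.ne_zero
      rwa [hp'm.leadingCoeff, inv_one, map_one, mul_one] at this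
    have hp'Q : p' ∣ Q := hmin ▸ minpoly.dvd F lam hQlam
    exact (hp'.associated_of_dvd hirr hp'Q).symm.dvd.trans hassoc.symm.dvd
  -- conclude
  have hPm : M.charpoly.Monic := Matrix.charpoly_monic M
  have hPdeg : M.charpoly.natDegree = r * d := by
    rw [Matrix.charpoly_natDegree_eq_dim, Fintype.card_fin]
  obtain ⟨e, he⟩ := eq_pow_of_forall_irreducible Q hQm (by omega) (M.charpoly.natDegree)
    M.charpoly le_rfl hPm hfac
  have : e * d = r * d := by
    have := hPdeg
    rw [he, hQm.natDegree_pow, hQdeg] at this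
    omega
  have he' : e = r := by
    have hd0 : 0 < d := Nat.pos_of_ne_zero hd
    exact Nat.eq_of_mul_eq_mul_right hd0 this
  rw [he, he']


lemma coeff_zero_dvd_aux {K : Type*} [Field K] [IsAlgClosed K] {d : ℕ} (hd : d ≠ 0)
    {f : MvPolynomial (Fin 2) K} (hsf : Squarefree f)
    {A B : Polynomial (MvPolynomial (Fin 2) K)} (hAm : A.Monic)
    (hprod : A * B = Polynomial.X ^ d - Polynomial.C f) (hgA : A.natDegree ≠ 0) :
    f ∣ A.coeff 0 := by
  have hvan : A.coeff 0 ∈ MvPolynomial.vanishingIdeal K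
      (MvPolynomial.zeroLocus K (Ideal.span {f})) := by
    rw [MvPolynomial.mem_vanishingIdeal_iff]
    intro x hx
    change MvPolynomial.eval x (A.coeff 0) = 0
    have hfx : MvPolynomial.eval x f = 0 := by
      rw [MvPolynomial.mem_zeroLocus_iff] at hx
      exact hx f (Ideal.subset_span rfl)
    have hQmap : (Polynomial.X ^ d - Polynomial.C f :
        Polynomial (MvPolynomial (Fin 2) K)).map (MvPolynomial.eval x)
        = (Polynomial.X : Polynomial K) ^ d := by
      rw [Polynomial.map_sub, Polynomial.map_pow, Polynomial.map_X, Polynomial.map_C, hfx]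
      simp
    have hdvd : (A.map (MvPolynomial.eval x)) ∣ (Polynomial.X : Polynomial K) ^ d :=
      ⟨B.map (MvPolynomial.eval x), by rw [← Polynomial.map_mul, hprod, hQmap]⟩
    obtain ⟨i, hi, hassoc⟩ := (dvd_prime_pow Polynomial.prime_X d).mp hdvd
    have hAX : A.map (MvPolynomial.eval x) = Polynomial.X ^ i :=
      Polynomial.eq_of_monic_of_associated (hAm.map _) (Polynomial.monic_X_pow i) hassoc
    have hine : i ≠ 0 := by
      intro h
      apply hgA
      have := congrArg Polynomial.natDegree hAX
      rwa [hAm.natDegree_map, h, pow_zero, Polynomial.natDegree_one] at this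
    have := congrArg (fun p => Polynomial.coeff p 0) hAX
    simpa [Polynomial.coeff_map, Polynomial.coeff_X_pow, Ne.symm hine] using this
  rw [MvPolynomial.vanishingIdeal_zeroLocus_eq_radical] at hvan
  obtain ⟨n, hn⟩ := Ideal.mem_radical_iff.mp hvan
  exact hsf.isRadical n (A.coeff 0) (Ideal.mem_span_singleton.mp hn)

lemma irreducible_X_pow_sub_C_mv {K : Type*} [Field K] [IsAlgClosed K] {d : ℕ} (hd : d ≠ 0)
    {f : MvPolynomial (Fin 2) K} (hsf : Squarefree f) (hfu : ¬ IsUnit f) :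
    Irreducible (Polynomial.X ^ d - Polynomial.C f :
      Polynomial (MvPolynomial (Fin 2) K)) := by
  set Q : Polynomial (MvPolynomial (Fin 2) K) := Polynomial.X ^ d - Polynomial.C f with hQdef
  have hf0 : f ≠ 0 := hsf.ne_zero
  have hQm : Q.Monic := Polynomial.monic_X_pow_sub_C f hd
  have hQdeg : Q.natDegree = d := Polynomial.natDegree_X_pow_sub_C
  constructor
  · intro h
    have := Polynomial.natDegree_eq_zero_of_isUnit h
    omega
  · intro A B hAB
    by_contra hcon
    push_neg at hcon
    obtain ⟨hAu, hBu⟩ := hcon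
    have hQAB : A * B = Q := hAB.symm
    have hA0 : A ≠ 0 := by
      rintro rfl; rw [zero_mul] at hQAB; exact hQm.ne_zero hQAB.symm
    have hB0 : B ≠ 0 := by
      rintro rfl; rw [mul_zero] at hQAB; exact hQm.ne_zero hQAB.symm
    have hlc : A.leadingCoeff * B.leadingCoeff = 1 := by
      have := congrArg Polynomial.leadingCoeff hQAB
      rwa [Polynomial.leadingCoeff_mul, hQm.leadingCoeff] at this
    have hdegAB : A.natDegree + B.natDegree = d := by
      have := congrArg Polynomial.natDegree hQAB
      rwa [Polynomial.natDegree_mul hA0 hB0, hQdeg] at this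
    have hgA : A.natDegree ≠ 0 := by
      intro h
      obtain ⟨a, ha⟩ := Polynomial.natDegree_eq_zero.mp h
      apply hAu
      rw [← ha]
      refine Polynomial.isUnit_C.mpr (IsUnit.of_mul_eq_one (a := a) B.leadingCoeff ?_)
      rw [← ha] at hlc
      simpa using hlc
    have hgB : B.natDegree ≠ 0 := by
      intro h
      obtain ⟨b, hb⟩ := Polynomial.natDegree_eq_zero.mp h
      apply hBu
      rw [← hb]
      refine Polynomial.isUnit_C.mpr (IsUnit.of_mul_eq_one (a := b) A.leadingCoeff ?_)
      rw [← hb] at hlc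
      simpa [mul_comm] using hlc
    set A₁ := Polynomial.C B.leadingCoeff * A with hA₁
    set B₁ := Polynomial.C A.leadingCoeff * B with hB₁
    have hprod : A₁ * B₁ = Q := by
      rw [hA₁, hB₁]
      calc Polynomial.C B.leadingCoeff * A * (Polynomial.C A.leadingCoeff * B)
          = Polynomial.C (A.leadingCoeff * B.leadingCoeff) * (A * B) := by
            rw [map_mul]; ring
        _ = Q := by rw [hlc, hQAB, map_one, one_mul]
    have hA₁m : A₁.Monic := by
      have : A₁.leadingCoeff = 1 := by
        rw [hA₁, Polynomial.leadingCoeff_mul, Polynomial.leadingCoeff_C, mul_comm, hlc]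
      exact this
    have hB₁m : B₁.Monic := by
      have : B₁.leadingCoeff = 1 := by
        rw [hB₁, Polynomial.leadingCoeff_mul, Polynomial.leadingCoeff_C, hlc]
      exact this
    have hlcA : (Polynomial.C B.leadingCoeff : Polynomial (MvPolynomial (Fin 2) K)) ≠ 0 := by
      simpa [Polynomial.C_eq_zero] using Polynomial.leadingCoeff_ne_zero.mpr hB0
    have hlcB : (Polynomial.C A.leadingCoeff : Polynomial (MvPolynomial (Fin 2) K)) ≠ 0 := by
      simpa [Polynomial.C_eq_zero] using Polynomial.leadingCoeff_ne_zero.mpr hA0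
    have hdA₁ : A₁.natDegree ≠ 0 := by
      rw [hA₁, Polynomial.natDegree_mul hlcA hA0, Polynomial.natDegree_C]
      omega
    have hdB₁ : B₁.natDegree ≠ 0 := by
      rw [hB₁, Polynomial.natDegree_mul hlcB hB0, Polynomial.natDegree_C]
      omega
    obtain ⟨va, hva⟩ := coeff_zero_dvd_aux hd hsf hA₁m hprod hdA₁
    obtain ⟨vb, hvb⟩ := coeff_zero_dvd_aux hd hsf hB₁m (by rw [mul_comm]; exact hprod) hdB₁
    have hc0 : A₁.coeff 0 * B₁.coeff 0 = -f := by
      have := congrArg (fun p => Polynomial.coeff p 0) hprod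
      simpa [Polynomial.mul_coeff_zero, hQdef, Polynomial.coeff_X_pow, Ne.symm hd] using this
    rw [hva, hvb] at hc0
    apply hfu
    refine IsUnit.of_mul_eq_one (a := f) (-(va * vb)) ?_
    have h1 : f * (f * (va * vb) + 1) = 0 := by linear_combination hc0
    have h2 : f * (va * vb) + 1 = 0 := by
      rcases mul_eq_zero.mp h1 with h | h
      · exact absurd h hf0
      · exact h
    linear_combination -h2

end Aux

open MvPolynomial


/-- For an `rd`-dimensional representation of the Clifford algebra of a squarefree binary
form `f` of degree `d` over an algebraically closed field `K` with `char K ∤ d`: for all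
`(a,b) ∈ K²`, the characteristic polynomial of `a•α_u + b•α_v` is `(X^d - f(a,b))^r`. -/
theorem charpoly_of_clifford_rep
    (K : Type*) [Field K] [IsAlgClosed K]
    (d r : ℕ) (hr : 1 ≤ r) (hchar : (d : K) ≠ 0)
    (f : MvPolynomial (Fin 2) K) (hf : f.IsHomogeneous d) (hsf : Squarefree f)
    (αu αv : Matrix (Fin (r * d)) (Fin (r * d)) K)
    (hrel : ∀ a b : K,
      (a • αu + b • αv) ^ d =
        eval ![a, b] f • (1 : Matrix (Fin (r * d)) (Fin (r * d)) K)) :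
    ∀ a b : K,
      (a • αu + b • αv).charpoly =
        (Polynomial.X ^ d - Polynomial.C (eval ![a, b] f)) ^ r := by
  have hd : d ≠ 0 := by
    rintro rfl
    exact hchar (by simp)
  -- f is not a unit
  have hfu : ¬ IsUnit f := by
    intro hu
    have h0 : eval (0 : Fin 2 → K) f = 0 := by
      rw [eval_zero, constantCoeff_eq]
      exact hf.coeff_eq_zero (by simpa using hd ∘ Eq.symm)
    have := hu.map (eval (0 : Fin 2 → K))
    rw [h0] at this
    exact not_isUnit_zero this
  -- the generic matrix
  set N : Matrix (Fin (r * d)) (Fin (r * d)) (MvPolynomial (Fin 2) K) :=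
    Matrix.of fun i j => X 0 * C (αu i j) + X 1 * C (αv i j) with hN
  have hveta : ∀ x : Fin 2 → K, ![x 0, x 1] = x := by
    intro x; funext i; fin_cases i <;> simp
  have hNmap : ∀ x : Fin 2 → K,
      (eval x : MvPolynomial (Fin 2) K →+* K).mapMatrix N = x 0 • αu + x 1 • αv := by
    intro x
    ext i j
    simp [hN, Matrix.add_apply, Matrix.smul_apply, smul_eq_mul]
  -- Clifford relation for the generic matrix
  have hNd : N ^ d = f • 1 := by
    refine Matrix.ext fun i j => ?_
    apply MvPolynomial.funext
    intro x
    have hmap : (eval x : MvPolynomial (Fin 2) K →+* K).mapMatrix (N ^ d)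
        = (x 0 • αu + x 1 • αv) ^ d := by
      rw [map_pow, hNmap x]
    have hent : eval x ((N ^ d) i j) = ((x 0 • αu + x 1 • αv) ^ d) i j := by
      rw [← hmap]; rfl
    rw [hent, hrel (x 0) (x 1), hveta x]
    by_cases h : i = j <;> simp [Matrix.smul_apply, Matrix.one_apply, h]
  -- move to the fraction field
  set F := FractionRing (MvPolynomial (Fin 2) K)
  have hinj : Function.Injective (algebraMap (MvPolynomial (Fin 2) K) F) :=
    IsFractionRing.injective _ _
  have hQirr : Irreducible (Polynomial.X ^ d - Polynomial.C f :
      Polynomial (MvPolynomial (Fin 2) K)) := irreducible_X_pow_sub_C_mv hd hsf hfu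
  have hQm : (Polynomial.X ^ d - Polynomial.C f :
      Polynomial (MvPolynomial (Fin 2) K)).Monic := Polynomial.monic_X_pow_sub_C f hd
  haveI : IsIntegrallyClosed (MvPolynomial (Fin 2) K) :=
    UniqueFactorizationMonoid.instIsIntegrallyClosed
  have hQirrF : Irreducible (Polynomial.X ^ d
      - Polynomial.C (algebraMap (MvPolynomial (Fin 2) K) F f) : Polynomial F) := by
    have := (hQm.irreducible_iff_irreducible_map_fraction_map (K := F)).mp hQirr
    rwa [Polynomial.map_sub, Polynomial.map_pow, Polynomial.map_X, Polynomial.map_C] at this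
  have hMd : (N.map (algebraMap (MvPolynomial (Fin 2) K) F)) ^ d
      = (algebraMap (MvPolynomial (Fin 2) K) F f) • 1 := by
    have : (algebraMap (MvPolynomial (Fin 2) K) F).mapMatrix (N ^ d)
        = (algebraMap (MvPolynomial (Fin 2) K) F).mapMatrix (f • 1) := by rw [hNd]
    rw [map_pow] at this
    rw [RingHom.mapMatrix_apply] at this
    rw [this]
    refine Matrix.ext fun i j => ?_
    by_cases h : i = j <;>
      simp [RingHom.mapMatrix_apply, Matrix.map_apply, Matrix.smul_apply, Matrix.one_apply, h]
  -- the generic charpoly identity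
  have hmain : N.charpoly = (Polynomial.X ^ d - Polynomial.C f) ^ r := by
    apply Polynomial.map_injective (algebraMap (MvPolynomial (Fin 2) K) F) hinj
    rw [← Matrix.charpoly_map,
      charpoly_eq_pow_of_pow_eq_smul_one hd _ hQirrF _ hMd,
      Polynomial.map_pow, Polynomial.map_sub, Polynomial.map_pow, Polynomial.map_X,
      Polynomial.map_C]
  -- specialize
  intro a b
  have h1 : (eval ![a, b] : MvPolynomial (Fin 2) K →+* K).mapMatrix N = a • αu + b • αv := by
    rw [hNmap ![a, b]]
    simp
  rw [← h1, RingHom.mapMatrix_apply, Matrix.charpoly_map, hmain,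
    Polynomial.map_pow, Polynomial.map_sub, Polynomial.map_pow, Polynomial.map_X,
    Polynomial.map_C]
end
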